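/- (Approximation guarantee under spectral equivalence.) Let c₁, c₂ > 0 and let S ∈ ℝ^{n×n} be symmetric with (1/c₁)·⟨L_n^{1/2} x, x⟩ ≤ ⟨S x, x⟩ ≤ c₂·⟨L_n^{1/2} x, x⟩ for all x ∈ ℝⁿ. Let X_C ∈ ℝ^{n×2} have rows √(2/n)·(cos(2πj/n), sin(2πj/n)), j = 1,…,n. Then Tr(X_Cᵀ S X_C) ≤ 4 c₂ sin(π/n), and for every X ∈ ℝ^{n×2} with Xᵀ X = I₂ and Xᵀ 𝟏ₙ = 0 one has Tr(X_Cᵀ S X_C) ≤ c₁ c₂ · Tr(Xᵀ S X). -/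

import Mathlib

open Real Matrix

noncomputable section

set_option linter.unusedSectionVars false
set_option maxHeartbeats 1000000

/-- The Laplacian of the `n`-cycle. -/
def cycLap (n : ℕ) : Matrix (ZMod n) (ZMod n) ℝ :=
  Matrix.of fun i j => if i = j then 2 else if i = j + 1 ∨ j = i + 1 then -1 else 0

/-- The circular embedding: rows `(X_C)_{j,·} = √(2/n)·(cos(2πj/n), sin(2πj/n))`. -/
def circEmb (n : ℕ) : Matrix (ZMod n) (Fin 2) ℝ :=
  Matrix.of fun j t =>
    Real.sqrt (2 / (n : ℝ)) *
      (if t = 0 then Real.cos (2 * π * (j.val : ℝ) / n)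
       else Real.sin (2 * π * (j.val : ℝ) / n))

/-- The positive semidefinite square root of a positive semidefinite matrix
(the definition `Matrix.PosSemidef.sqrt` of the older Mathlib, since removed). -/
def Matrix.PosSemidef.sqrt {m : Type*} [Fintype m] [DecidableEq m]
    {A : Matrix m m ℝ} (hA : A.PosSemidef) : Matrix m m ℝ :=
  hA.1.eigenvectorUnitary.1 * diagonal ((↑) ∘ (Real.sqrt ∘ hA.1.eigenvalues)) *
    (star hA.1.eigenvectorUnitary : Matrix m m ℝ)

theorem Matrix.PosSemidef.posSemidef_sqrt {m : Type*} [Fintype m] [DecidableEq m]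
    {A : Matrix m m ℝ} (hA : A.PosSemidef) : hA.sqrt.PosSemidef := by
  unfold Matrix.PosSemidef.sqrt
  have hU : (star hA.1.eigenvectorUnitary : Matrix m m ℝ)
      = (hA.1.eigenvectorUnitary : Matrix m m ℝ)ᴴ := rfl
  rw [hU]
  exact (PosSemidef.diagonal (Pi.le_def.mpr fun i => by simp [Real.sqrt_nonneg])).mul_mul_conjTranspose_same _

theorem Matrix.PosSemidef.sqrt_mul_self {m : Type*} [Fintype m] [DecidableEq m]
    {A : Matrix m m ℝ} (hA : A.PosSemidef) : hA.sqrt * hA.sqrt = A := by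
  unfold Matrix.PosSemidef.sqrt
  set U : Matrix m m ℝ := (hA.1.eigenvectorUnitary : Matrix m m ℝ) with hUdef
  have hUU : star U * U = 1 :=
    Unitary.star_mul_self_of_mem hA.1.eigenvectorUnitary.2
  set D := diagonal ((fun x : ℝ => x) ∘ (Real.sqrt ∘ hA.1.eigenvalues)) with hD
  have e : U * D * star U * (U * D * star U)
      = U * D * (star U * U) * D * star U := by
    simp only [Matrix.mul_assoc]
  rw [e, hUU, Matrix.mul_one, Matrix.mul_assoc U D D, hD, diagonal_mul_diagonal]
  conv_rhs => rw [hA.1.spectral_theorem, Unitary.conjStarAlgAut_apply]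
  congr 3
  funext i
  simp [Real.mul_self_sqrt (hA.eigenvalues_nonneg i)]

namespace ApproxGuarantee

variable {n : ℕ} [NeZero n]

local notation "ψ" => ZMod.stdAddChar (N := n)

/-! ### Elementary facts about `ZMod n` -/

lemma two_ne_zero_zmod (hn : 3 ≤ n) : (2 : ZMod n) ≠ 0 := by
  have : ((2 : ℕ) : ZMod n) ≠ 0 := by
    rw [Ne, ZMod.natCast_eq_zero_iff]
    intro h
    exact absurd (Nat.le_of_dvd (by norm_num) h) (by omega)
  simpa using this

lemma one_ne_zero_zmod (hn : 3 ≤ n) : (1 : ZMod n) ≠ 0 := by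
  have : ((1 : ℕ) : ZMod n) ≠ 0 := by
    rw [Ne, ZMod.natCast_eq_zero_iff]
    intro h
    exact absurd (Nat.le_of_dvd (by norm_num) h) (by omega)
  simpa using this

/-! ### The cycle Laplacian: basic identities -/

lemma cycLap_mulVec (hn : 3 ≤ n) (x : ZMod n → ℝ) (i : ZMod n) :
    (cycLap n *ᵥ x) i = 2 * x i - x (i + 1) - x (i - 1) := by
  have h1 : i + 1 ≠ i := fun h => one_ne_zero_zmod hn (by linear_combination h)
  have h2 : i - 1 ≠ i := fun h => one_ne_zero_zmod hn (by linear_combination -h)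
  have h3 : i + 1 ≠ i - 1 := fun h => two_ne_zero_zmod hn (by linear_combination h)
  have key : ∀ j : ZMod n,
      (if i = j then (2:ℝ) else if i = j + 1 ∨ j = i + 1 then -1 else 0) * x j
      = (if j = i then 2 * x i else 0) + (if j = i + 1 then -x (i+1) else 0)
        + (if j = i - 1 then -x (i-1) else 0) := by
    intro j
    by_cases e1 : j = i
    · subst e1
      rw [if_pos rfl, if_pos rfl, if_neg (Ne.symm h1), if_neg (Ne.symm h2)]
      ring
    · by_cases e2 : j = i + 1
      · subst e2
        rw [if_neg (Ne.symm h1), if_neg h1, if_pos (Or.inr rfl), if_pos rfl, if_neg h3]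
        ring
      · by_cases e3 : j = i - 1
        · subst e3
          rw [if_neg (Ne.symm h2), if_neg h2, if_neg (Ne.symm h3), if_pos rfl,
            if_pos (Or.inl (sub_add_cancel i 1).symm)]
          ring
        · rw [if_neg (fun h => e1 h.symm), if_neg, if_neg e1, if_neg e2, if_neg e3]
          · ring
          · rintro (h | h)
            · exact e3 (by linear_combination h.symm)
            · exact e2 h
  show (∑ j, (if i = j then (2:ℝ) else if i = j + 1 ∨ j = i + 1 then -1 else 0) * x j) = _
  rw [Finset.sum_congr rfl (fun j _ => key j)]
  rw [Finset.sum_add_distrib, Finset.sum_add_distrib]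
  simp [Finset.sum_ite_eq']
  ring

lemma cycLap_quadform (hn : 3 ≤ n) (x : ZMod n → ℝ) :
    (cycLap n *ᵥ x) ⬝ᵥ x = ∑ j, (x (j + 1) - x j) ^ 2 := by
  have reindex : ∀ f : ZMod n → ℝ, ∑ j : ZMod n, f (j + 1) = ∑ j : ZMod n, f j :=
    fun f => Fintype.sum_equiv (Equiv.addRight 1) _ _ (fun j => rfl)
  have r2 : ∑ j : ZMod n, x (j - 1) * x j = ∑ j : ZMod n, x j * x (j + 1) := by
    rw [← reindex (fun j => x (j - 1) * x j)]
    simp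
  show (∑ i, (cycLap n *ᵥ x) i * x i) = _
  simp only [cycLap_mulVec hn x]
  have expand : ∑ j : ZMod n, (x (j + 1) - x j) ^ 2
      = ∑ j : ZMod n, (x (j+1)^2 + x j ^2 - 2 * (x j * x (j+1))) := by
    apply Finset.sum_congr rfl; intro j _; ring
  rw [expand]
  rw [Finset.sum_sub_distrib, Finset.sum_add_distrib, reindex (fun j => x j ^ 2)]
  have lhs : ∑ i : ZMod n, (2 * x i - x (i + 1) - x (i - 1)) * x i
      = 2 * ∑ i : ZMod n, x i ^ 2 - ∑ i : ZMod n, x (i+1) * x i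
        - ∑ i : ZMod n, x (i - 1) * x i := by
    rw [Finset.mul_sum, ← Finset.sum_sub_distrib, ← Finset.sum_sub_distrib]
    apply Finset.sum_congr rfl; intro j _; ring
  rw [lhs, r2]
  have r3 : ∑ i : ZMod n, x (i+1) * x i = ∑ i : ZMod n, x i * x (i+1) := by
    apply Finset.sum_congr rfl; intro j _; ring
  rw [r3, ← Finset.mul_sum]
  ring

lemma sum_cycLap_mulVec (hn : 3 ≤ n) (x : ZMod n → ℝ) :
    ∑ i, (cycLap n *ᵥ x) i = 0 := by
  have reindex : ∀ f : ZMod n → ℝ, ∑ j : ZMod n, f (j + 1) = ∑ j : ZMod n, f j :=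
    fun f => Fintype.sum_equiv (Equiv.addRight 1) _ _ (fun j => rfl)
  have reindex' : ∀ f : ZMod n → ℝ, ∑ j : ZMod n, f (j - 1) = ∑ j : ZMod n, f j :=
    fun f => Fintype.sum_equiv (Equiv.subRight 1) _ _ (fun j => rfl)
  simp only [cycLap_mulVec hn x]
  have : ∑ i : ZMod n, (2 * x i - x (i + 1) - x (i - 1))
      = ∑ i : ZMod n, 2 * x i - ∑ i : ZMod n, x (i + 1) - ∑ i : ZMod n, x (i - 1) := by
    rw [← Finset.sum_sub_distrib, ← Finset.sum_sub_distrib]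
  rw [this, reindex (fun j => x j), reindex' (fun j => x j), ← Finset.mul_sum]
  ring

lemma const_of_quadform_zero (hn : 3 ≤ n) (x : ZMod n → ℝ)
    (h : (cycLap n *ᵥ x) ⬝ᵥ x = 0) : ∀ j : ZMod n, x j = x 0 := by
  rw [cycLap_quadform hn] at h
  have hz : ∀ j : ZMod n, x (j + 1) = x j := by
    intro j
    have := (Finset.sum_eq_zero_iff_of_nonneg (fun i _ => sq_nonneg _)).1 h j (Finset.mem_univ j)
    have := sq_eq_zero_iff.1 this
    linarith
  intro j
  have : ∀ m : ℕ, x (m : ZMod n) = x 0 := by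
    intro m
    induction m with
    | zero => simp
    | succ k ih => rw [show ((k+1 : ℕ) : ZMod n) = (k : ZMod n) + 1 by push_cast; ring, hz]; exact ih
  have hj : ((j.val : ℕ) : ZMod n) = j := by simp [ZMod.natCast_val, ZMod.cast_id]
  rw [← hj]; exact this j.val

/-! ### Discrete Fourier analysis on `ZMod n` -/

def fo (Φ : ZMod n → ℂ) (k : ZMod n) : ℂ := ∑ j, Φ j * ψ (j * k)

lemma conj_char (k : ZMod n) : (starRingEnd ℂ) (ψ k) = ψ (-k) := by
  rw [AddChar.map_neg_eq_inv, ZMod.stdAddChar_apply, ← Complex.inv_eq_conj (Circle.norm_coe _)]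

lemma char_sum (t : ZMod n) : ∑ i, ψ (t * i) = if t = 0 then (n : ℂ) else 0 := by
  split_ifs with h
  · simp [h]
  · have h2 := AddChar.sum_eq_zero_of_ne_one (ZMod.isPrimitive_stdAddChar n h)
    simpa [AddChar.mulShift_apply] using h2

lemma parseval_aux (Φ : ZMod n → ℂ) :
    ∑ k, fo Φ k * (starRingEnd ℂ) (fo Φ k) = n * ∑ j, Φ j * (starRingEnd ℂ) (Φ j) := by
  have step : ∀ k, fo Φ k * (starRingEnd ℂ) (fo Φ k)
      = ∑ j, ∑ j', Φ j * (starRingEnd ℂ) (Φ j') * ψ ((j - j') * k) := by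
    intro k
    rw [fo, map_sum, Finset.sum_mul_sum]
    refine Finset.sum_congr rfl fun j _ => Finset.sum_congr rfl fun j' _ => ?_
    rw [map_mul (starRingEnd ℂ), conj_char]
    have : ψ (j*k) * ψ (-(j'*k)) = ψ ((j - j')*k) := by
      rw [← AddChar.map_add_eq_mul]; congr 1; ring
    calc Φ j * ψ (j*k) * ((starRingEnd ℂ) (Φ j') * ψ (-(j'*k)))
        = Φ j * (starRingEnd ℂ) (Φ j') * (ψ (j*k) * ψ (-(j'*k))) := by ring
      _ = _ := by rw [this]
  rw [Finset.sum_congr rfl (fun k _ => step k), Finset.sum_comm]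
  have inner : ∀ j : ZMod n, ∑ k : ZMod n, ∑ j' : ZMod n, Φ j * (starRingEnd ℂ) (Φ j') * ψ ((j - j') * k)
      = Φ j * (starRingEnd ℂ) (Φ j) * n := by
    intro j
    rw [Finset.sum_comm]
    have : ∀ j' : ZMod n, ∑ k : ZMod n, Φ j * (starRingEnd ℂ) (Φ j') * ψ ((j - j') * k)
        = Φ j * (starRingEnd ℂ) (Φ j') * (if j - j' = 0 then (n:ℂ) else 0) := by
      intro j'
      rw [← Finset.mul_sum, char_sum]
    rw [Finset.sum_congr rfl (fun j' _ => this j')]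
    simp only [sub_eq_zero, mul_ite, mul_zero]
    rw [Finset.sum_ite_eq]
    simp [eq_comm]
  rw [Finset.sum_congr rfl (fun j _ => inner j), ← Finset.sum_mul]
  ring

lemma parseval (x : ZMod n → ℝ) :
    ∑ k, Complex.normSq (fo (fun j => (x j : ℂ)) k) = n * ∑ j, x j ^ 2 := by
  have h := parseval_aux (fun j => ((x j : ℝ) : ℂ))
  simp only [Complex.mul_conj] at h
  have : ∀ j, Complex.normSq ((x j : ℂ)) = x j ^ 2 := fun j => by
    rw [Complex.normSq_ofReal]; ring
  rw [Finset.sum_congr rfl (fun j _ => by rw [this j] : ∀ j ∈ Finset.univ, (Complex.normSq ((x j:ℂ)) : ℂ) = ((x j ^2 : ℝ) : ℂ))] at h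
  exact_mod_cast h

lemma fo_shift (Φ : ZMod n → ℂ) (k : ZMod n) :
    fo (fun j => Φ (j + 1)) k = ψ (-k) * fo Φ k := by
  have : ∑ j : ZMod n, Φ (j+1) * ψ (j * k) = ∑ j : ZMod n, Φ j * ψ ((j - 1) * k) :=
    Fintype.sum_equiv (Equiv.addRight (1 : ZMod n)) _ _ (fun j => by simp)
  rw [fo, this, fo, Finset.mul_sum]
  refine Finset.sum_congr rfl fun j _ => ?_
  have : ψ ((j - 1) * k) = ψ (-k) * ψ (j * k) := by
    rw [← AddChar.map_add_eq_mul]; congr 1; ring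
  rw [this]; ring

lemma sin_bound (hn : 3 ≤ n) {m : ℕ} (h1 : 1 ≤ m) (h2 : m ≤ n - 1) :
    Real.sin (π / n) ≤ Real.sin (π * m / n) := by
  have hn0 : (0:ℝ) < n := by positivity
  have hpi : 0 < π := Real.pi_pos
  have ha : 0 < π / n := by positivity
  have hna : (n:ℝ) * (π / n) = π := by field_simp
  have hb : π * m / n = (m:ℝ) * (π / n) := by ring
  have hm1 : (1:ℝ) ≤ (m:ℝ) := by exact_mod_cast h1
  have hmn : (m:ℝ) + 1 ≤ (n:ℝ) := by
    have : m + 1 ≤ n := by omega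
    exact_mod_cast this
  have hab : π / n ≤ π * m / n := by rw [hb]; nlinarith
  by_cases hc : π * m / n ≤ π / 2
  · exact Real.sin_le_sin_of_le_of_le_pi_div_two (by linarith) hc hab
  · push_neg at hc
    have key : Real.sin (π * m / n) = Real.sin (π - π * m / n) := (Real.sin_pi_sub _).symm
    rw [key]
    apply Real.sin_le_sin_of_le_of_le_pi_div_two (by linarith)
    · linarith
    · rw [hb]; nlinarith [mul_nonneg (sub_nonneg.2 hmn) ha.le]

lemma sin_pi_div_nonneg (hn : 3 ≤ n) : 0 ≤ Real.sin (π / n) := by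
  have hn0 : (0:ℝ) < n := by positivity
  apply Real.sin_nonneg_of_nonneg_of_le_pi
  · positivity
  · have hn1 : (3:ℝ) ≤ n := by exact_mod_cast hn
    rw [div_le_iff₀ hn0]; nlinarith [Real.pi_pos]

lemma normSq_char_sub_one (k : ZMod n) : Complex.normSq (ψ k - 1)
    = 4 * Real.sin (π * k.val / n) ^ 2 := by
  have h := ZMod.stdAddChar_coe (N := n) (k.val : ℤ)
  rw [show ((k.val : ℤ) : ZMod n) = k by simp [ZMod.natCast_val, ZMod.intCast_cast]] at h
  have h2 : (2 * π * Complex.I * ((k.val : ℤ) : ℂ) / n) = ((2 * (π * k.val / n) : ℝ) : ℂ) * Complex.I := by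
    push_cast; ring
  rw [h, h2, Complex.exp_mul_I, ← Complex.ofReal_cos, ← Complex.ofReal_sin]
  set t := π * (k.val : ℝ) / n
  have e : (Real.cos (2*t) : ℂ) + (Real.sin (2*t) : ℂ) * Complex.I - 1
      = ((Real.cos (2*t) - 1 : ℝ) : ℂ) + ((Real.sin (2*t) : ℝ) : ℂ) * Complex.I := by
    push_cast; ring
  rw [e, Complex.normSq_add_mul_I]
  have h1 := Real.sin_sq_add_cos_sq t
  rw [Real.cos_two_mul t, Real.sin_two_mul t]
  linear_combination (4 * Real.cos t ^ 2 - 4) * h1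

/-- Discrete Poincaré inequality on the cycle. -/
lemma poincare (hn : 3 ≤ n) (x : ZMod n → ℝ) (h0 : ∑ j, x j = 0) :
    4 * Real.sin (π / n) ^ 2 * (x ⬝ᵥ x) ≤ (cycLap n *ᵥ x) ⬝ᵥ x := by
  have hn0 : (0:ℝ) < n := by positivity
  rw [cycLap_quadform hn x]
  set Φ : ZMod n → ℂ := fun j => (x j : ℂ) with hΦ
  set y : ZMod n → ℝ := fun j => x (j+1) - x j with hy
  have hfy : ∀ k, fo (fun j => (y j : ℂ)) k = (ψ (-k) - 1) * fo Φ k := by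
    intro k
    have h1 : fo (fun j => (y j : ℂ)) k = fo (fun j => Φ (j+1)) k - fo Φ k := by
      simp only [fo, hy, hΦ, Complex.ofReal_sub, sub_mul, Finset.sum_sub_distrib]
    rw [h1, fo_shift]; ring
  have hpy := parseval (n := n) y
  have hpx := parseval (n := n) x
  have hX0 : fo Φ 0 = 0 := by
    have : ∀ j : ZMod n, Φ j * ψ (j * 0) = Φ j := by
      intro j; rw [mul_zero, AddChar.map_zero_eq_one, mul_one]
    rw [fo, Finset.sum_congr rfl (fun j _ => this j)]
    rw [hΦ]
    norm_cast
  have hsin0 : 0 ≤ Real.sin (π / n) := sin_pi_div_nonneg hn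
  have key : ∀ k : ZMod n, 4 * Real.sin (π / n) ^ 2 * Complex.normSq (fo Φ k)
      ≤ Complex.normSq (ψ (-k) - 1) * Complex.normSq (fo Φ k) := by
    intro k
    by_cases hk : k = 0
    · subst hk; rw [hX0]; simp
    · have hnk : (-k) ≠ 0 := by simpa using hk
      have hval1 : 1 ≤ (-k).val := by
        rcases Nat.eq_zero_or_pos (-k).val with h | h
        · exact absurd ((ZMod.val_eq_zero _).1 h) hnk
        · exact h
      have hval2 : (-k).val ≤ n - 1 := by
        have := ZMod.val_lt (-k); omega
      rw [normSq_char_sub_one]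
      have hs := sin_bound hn hval1 hval2
      have : Real.sin (π / n) ^ 2 ≤ Real.sin (π * (-k).val / n) ^ 2 :=
        pow_le_pow_left₀ hsin0 hs 2
      nlinarith [Complex.normSq_nonneg (fo Φ k)]
  have sum_key : ∑ k : ZMod n, 4 * Real.sin (π / n) ^ 2 * Complex.normSq (fo Φ k)
      ≤ ∑ k : ZMod n, Complex.normSq (ψ (-k) - 1) * Complex.normSq (fo Φ k) :=
    Finset.sum_le_sum (fun k _ => key k)
  have lhs_eq : ∑ k : ZMod n, 4 * Real.sin (π / n) ^ 2 * Complex.normSq (fo Φ k)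
      = 4 * Real.sin (π / n) ^ 2 * (n * ∑ j, x j ^ 2) := by
    rw [← Finset.mul_sum, hpx]
  have rhs_eq : ∑ k : ZMod n, Complex.normSq (ψ (-k) - 1) * Complex.normSq (fo Φ k)
      = n * ∑ j, y j ^ 2 := by
    rw [← hpy]
    refine Finset.sum_congr rfl fun k _ => ?_
    rw [hfy k, Complex.normSq_mul]
  rw [lhs_eq, rhs_eq] at sum_key
  have hxx : x ⬝ᵥ x = ∑ j, x j ^ 2 := by
    simp [dotProduct, sq]
  rw [hxx]
  have hyy : ∑ j : ZMod n, (x (j + 1) - x j) ^ 2 = ∑ j, y j ^ 2 := rfl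
  rw [hyy]
  have : (n:ℝ) * (4 * Real.sin (π / n) ^ 2 * ∑ j, x j ^ 2) ≤ n * ∑ j, y j ^ 2 := by
    linarith [sum_key]
  exact le_of_mul_le_mul_left this hn0

/-! ### Matrix helper lemmas -/

lemma mulVec_dot (A : Matrix (ZMod n) (ZMod n) ℝ) (x y : ZMod n → ℝ) :
    (A *ᵥ x) ⬝ᵥ y = x ⬝ᵥ (Aᵀ *ᵥ y) := by
  rw [dotProduct_comm, Matrix.dotProduct_mulVec, Matrix.mulVec_transpose,
    dotProduct_comm]

lemma sqrt_eig (hL : (cycLap n).PosSemidef) {μ : ℝ} (hμ : 0 ≤ μ) (v : ZMod n → ℝ)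
    (hv : cycLap n *ᵥ v = (μ ^ 2) • v) : hL.sqrt *ᵥ v = μ • v := by
  set M := hL.sqrt with hMdef
  have hM : M.PosSemidef := hL.posSemidef_sqrt
  have hMM : M * M = cycLap n := hL.sqrt_mul_self
  have hMT : Mᵀ = M := by
    rw [← Matrix.conjTranspose_eq_transpose_of_trivial]; exact hM.1
  rcases eq_or_lt_of_le hμ with h0 | hpos
  · have hLv : cycLap n *ᵥ v = 0 := by rw [hv, ← h0]; simp
    have hMv : (M *ᵥ v) ⬝ᵥ (M *ᵥ v) = 0 := by
      rw [mulVec_dot, hMT, Matrix.mulVec_mulVec, hMM, hLv, dotProduct_zero]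
    have := dotProduct_self_eq_zero.1 hMv
    rw [this, ← h0, zero_smul]
  · set w : ZMod n → ℝ := M *ᵥ v - μ • v with hw
    have hMw : M *ᵥ w = (-μ) • w := by
      rw [hw, Matrix.mulVec_sub, Matrix.mulVec_smul, Matrix.mulVec_mulVec, hMM, hv]
      funext j
      simp only [Pi.sub_apply, Pi.smul_apply, smul_eq_mul]
      ring
    have h1 : 0 ≤ w ⬝ᵥ (M *ᵥ w) := by simpa using hM.dotProduct_mulVec_nonneg w
    rw [hMw] at h1
    have h2 : w ⬝ᵥ ((-μ) • w) = (-μ) * (w ⬝ᵥ w) := by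
      rw [dotProduct_smul, smul_eq_mul]
    rw [h2] at h1
    have h3 : 0 ≤ w ⬝ᵥ w := Finset.sum_nonneg fun i _ => mul_self_nonneg _
    have h4 : w ⬝ᵥ w = 0 := by nlinarith
    have hw0 : w = 0 := dotProduct_self_eq_zero.1 h4
    rw [hw] at hw0
    rw [sub_eq_zero] at hw0
    exact hw0

/-- The key spectral lower bound for the square root of the Laplacian on `𝟏^⊥`. -/
lemma sqrt_quad_lower (hn : 3 ≤ n) (hL : (cycLap n).PosSemidef) (x : ZMod n → ℝ)
    (hsum : ∑ j, x j = 0) :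
    2 * Real.sin (π / n) * (x ⬝ᵥ x) ≤ (hL.sqrt *ᵥ x) ⬝ᵥ x := by
  set M := hL.sqrt with hMdef
  have hM : M.PosSemidef := hL.posSemidef_sqrt
  have hMM : M * M = cycLap n := hL.sqrt_mul_self
  have hMh : M.IsHermitian := hM.1
  set U : Matrix (ZMod n) (ZMod n) ℝ :=
    (Matrix.IsHermitian.eigenvectorUnitary hMh : Matrix (ZMod n) (ZMod n) ℝ) with hUdef
  set μ : ZMod n → ℝ := hMh.eigenvalues with hμdef
  have hUU : Uᵀ * U = 1 := by
    have := Unitary.star_mul_self_of_mem (Matrix.IsHermitian.eigenvectorUnitary hMh).2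
    simpa [Matrix.star_eq_conjTranspose, Matrix.conjTranspose_eq_transpose_of_trivial] using this
  have hUUt : U * Uᵀ = 1 := by
    have := Unitary.mul_star_self_of_mem (Matrix.IsHermitian.eigenvectorUnitary hMh).2
    simpa [Matrix.star_eq_conjTranspose, Matrix.conjTranspose_eq_transpose_of_trivial] using this
  have hspec : M = U * Matrix.diagonal μ * Uᵀ := by
    have h := hMh.spectral_theorem
    simpa [Matrix.star_eq_conjTranspose, Matrix.conjTranspose_eq_transpose_of_trivial,
      Function.comp, Unitary.conjStarAlgAut_apply] using h
  set u : ZMod n → ZMod n → ℝ := fun i j => U j i with hu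
  have hMU : M * U = U * Matrix.diagonal μ := by
    rw [hspec, Matrix.mul_assoc, Matrix.mul_assoc, hUU, Matrix.mul_one]
  have hcol : ∀ i, M *ᵥ u i = μ i • u i := by
    intro i
    funext j
    have h1 : (M * U) j i = (M *ᵥ u i) j := by
      simp [Matrix.mul_apply, Matrix.mulVec, dotProduct, hu]
    have h2 : (U * Matrix.diagonal μ) j i = U j i * μ i := Matrix.mul_diagonal _ _ _ _
    have := congrArg (fun A => A j i) hMU
    rw [h1, h2] at this
    rw [this]
    simp [hu, mul_comm]
  have hnorm : ∀ i, u i ⬝ᵥ u i = 1 := by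
    intro i
    have := congrArg (fun A => A i i) hUU
    simpa [Matrix.mul_apply, dotProduct, Matrix.one_apply, hu, Matrix.transpose_apply] using this
  set y : ZMod n → ℝ := Uᵀ *ᵥ x with hy
  have hyi : ∀ i, y i = u i ⬝ᵥ x := by
    intro i; simp [hy, hu, Matrix.mulVec, dotProduct, Matrix.transpose_apply]
  have hxx : x ⬝ᵥ x = y ⬝ᵥ y := by
    rw [hy, mulVec_dot, Matrix.transpose_transpose, Matrix.mulVec_mulVec, hUUt,
      Matrix.one_mulVec]
  have hMxx : (M *ᵥ x) ⬝ᵥ x = (Matrix.diagonal μ *ᵥ y) ⬝ᵥ y := by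
    rw [hspec]
    rw [← Matrix.mulVec_mulVec, ← Matrix.mulVec_mulVec, mulVec_dot, ← hy]
  have hsin0 : 0 ≤ Real.sin (π / n) := sin_pi_div_nonneg hn
  have hμ0 : ∀ i, 0 ≤ μ i := by
    intro i
    have h := hM.dotProduct_mulVec_nonneg (u i)
    rw [star_trivial, hcol i, dotProduct_smul, smul_eq_mul, hnorm i, mul_one] at h
    exact h
  have key : ∀ i, 2 * Real.sin (π / n) * y i ^ 2 ≤ μ i * y i ^ 2 := by
    intro i
    rcases eq_or_lt_of_le (hμ0 i) with h0 | hpos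
    · have hMu : M *ᵥ u i = 0 := by rw [hcol i, ← h0, zero_smul]
      have hLu : cycLap n *ᵥ u i = 0 := by
        rw [← hMM, ← Matrix.mulVec_mulVec, hMu, Matrix.mulVec_zero]
      have hq : (cycLap n *ᵥ u i) ⬝ᵥ u i = 0 := by rw [hLu, zero_dotProduct]
      have hconst := const_of_quadform_zero hn (u i) hq
      have hyi0 : y i = 0 := by
        rw [hyi i]
        show ∑ j, u i j * x j = 0
        rw [Finset.sum_congr rfl (fun j _ => by rw [hconst j]), ← Finset.mul_sum, hsum,
          mul_zero]
      rw [hyi0]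
      simp
    · have hLu : cycLap n *ᵥ u i = (μ i ^ 2) • u i := by
        rw [← hMM, ← Matrix.mulVec_mulVec, hcol i, Matrix.mulVec_smul, hcol i, smul_smul]
        congr 1
        ring
      have hsum_u : ∑ j, u i j = 0 := by
        have hz := sum_cycLap_mulVec hn (u i)
        rw [hLu] at hz
        have : ∑ j, ((μ i ^ 2) • u i) j = (μ i ^ 2) * ∑ j, u i j := by
          rw [Finset.mul_sum]
          exact Finset.sum_congr rfl (fun j _ => by simp)
        rw [this] at hz
        have hμ2 : μ i ^ 2 ≠ 0 := by positivity
        exact (mul_eq_zero.1 hz).resolve_left hμ2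
      have hpo := poincare hn (u i) hsum_u
      rw [hLu, smul_dotProduct, smul_eq_mul, hnorm i, mul_one] at hpo
      have hμ_ge : 2 * Real.sin (π / n) ≤ μ i := by
        nlinarith
      exact mul_le_mul_of_nonneg_right hμ_ge (sq_nonneg _)
  have hyy : y ⬝ᵥ y = ∑ i, y i ^ 2 := by simp [dotProduct, sq]
  have hdiag : (Matrix.diagonal μ *ᵥ y) ⬝ᵥ y = ∑ i, μ i * y i ^ 2 := by
    simp only [dotProduct, Matrix.mulVec_diagonal]
    exact Finset.sum_congr rfl (fun i _ => by ring)
  rw [hMxx, hdiag, hxx, hyy, Finset.mul_sum]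
  exact Finset.sum_le_sum (fun i _ => key i)


/-! ### Explicit eigenvectors of the cycle Laplacian -/

lemma cos_mod (m : ℕ) : Real.cos (2 * π * ((m % n : ℕ) : ℝ) / n) = Real.cos (2 * π * m / n) := by
  have hn0 : (0:ℝ) < n := by
    have := Nat.pos_of_ne_zero (NeZero.ne n); positivity
  have hmd : ((m % n : ℕ) : ℝ) + (n : ℝ) * ((m / n : ℕ) : ℝ) = m := by
    exact_mod_cast Nat.mod_add_div m n
  have h : 2 * π * (m:ℝ) / n = 2 * π * ((m % n : ℕ) : ℝ) / n + ((m / n : ℕ) : ℤ) * (2 * π) := by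
    have hc : (((m / n : ℕ) : ℤ) : ℝ) = ((m / n : ℕ) : ℝ) := by push_cast; rfl
    rw [hc, ← hmd]; field_simp
  rw [h, Real.cos_add_int_mul_two_pi]

lemma sin_mod (m : ℕ) : Real.sin (2 * π * ((m % n : ℕ) : ℝ) / n) = Real.sin (2 * π * m / n) := by
  have hn0 : (0:ℝ) < n := by
    have := Nat.pos_of_ne_zero (NeZero.ne n); positivity
  have hmd : ((m % n : ℕ) : ℝ) + (n : ℝ) * ((m / n : ℕ) : ℝ) = m := by
    exact_mod_cast Nat.mod_add_div m n
  have h : 2 * π * (m:ℝ) / n = 2 * π * ((m % n : ℕ) : ℝ) / n + ((m / n : ℕ) : ℤ) * (2 * π) := by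
    have hc : (((m / n : ℕ) : ℤ) : ℝ) = ((m / n : ℕ) : ℝ) := by push_cast; rfl
    rw [hc, ← hmd]; field_simp
  rw [h, Real.sin_add_int_mul_two_pi]

lemma val_add_one (hn : 3 ≤ n) (i : ZMod n) : (i + 1).val = (i.val + 1) % n := by
  haveI : Fact (1 < n) := ⟨by omega⟩
  rw [ZMod.val_add, ZMod.val_one]

lemma cos_succ (hn : 3 ≤ n) (i : ZMod n) :
    Real.cos (2 * π * ((i+1).val : ℝ) / n)
      = Real.cos (2 * π * (i.val : ℝ) / n) * Real.cos (2 * π / n)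
        - Real.sin (2 * π * (i.val : ℝ) / n) * Real.sin (2 * π / n) := by
  rw [val_add_one hn, cos_mod]
  have h : 2 * π * ((i.val + 1 : ℕ) : ℝ) / n = 2 * π * (i.val : ℝ) / n + 2 * π / n := by
    push_cast; ring
  rw [h, Real.cos_add]

lemma sin_succ (hn : 3 ≤ n) (i : ZMod n) :
    Real.sin (2 * π * ((i+1).val : ℝ) / n)
      = Real.sin (2 * π * (i.val : ℝ) / n) * Real.cos (2 * π / n)
        + Real.cos (2 * π * (i.val : ℝ) / n) * Real.sin (2 * π / n) := by
  rw [val_add_one hn, sin_mod]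
  have h : 2 * π * ((i.val + 1 : ℕ) : ℝ) / n = 2 * π * (i.val : ℝ) / n + 2 * π / n := by
    push_cast; ring
  rw [h, Real.sin_add]

lemma cos_pred (hn : 3 ≤ n) (i : ZMod n) :
    Real.cos (2 * π * ((i-1).val : ℝ) / n)
      = Real.cos (2 * π * (i.val : ℝ) / n) * Real.cos (2 * π / n)
        + Real.sin (2 * π * (i.val : ℝ) / n) * Real.sin (2 * π / n) := by
  have h1 := cos_succ hn (i - 1)
  have h2 := sin_succ hn (i - 1)
  rw [sub_add_cancel] at h1 h2
  have hω := Real.sin_sq_add_cos_sq (2 * π / n)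
  linear_combination (-(Real.cos (2 * π / n))) * h1 - Real.sin (2 * π / n) * h2
    - Real.cos (2 * π * ((i-1).val : ℝ) / n) * hω

lemma sin_pred (hn : 3 ≤ n) (i : ZMod n) :
    Real.sin (2 * π * ((i-1).val : ℝ) / n)
      = Real.sin (2 * π * (i.val : ℝ) / n) * Real.cos (2 * π / n)
        - Real.cos (2 * π * (i.val : ℝ) / n) * Real.sin (2 * π / n) := by
  have h1 := cos_succ hn (i - 1)
  have h2 := sin_succ hn (i - 1)
  rw [sub_add_cancel] at h1 h2
  have hω := Real.sin_sq_add_cos_sq (2 * π / n)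
  linear_combination Real.sin (2 * π / n) * h1 - Real.cos (2 * π / n) * h2
    - Real.sin (2 * π * ((i-1).val : ℝ) / n) * hω

lemma eig_val : 2 - 2 * Real.cos (2 * π / (n:ℝ)) = (2 * Real.sin (π / n)) ^ 2 := by
  have h1 := Real.cos_two_mul (π / n)
  have h2 := Real.sin_sq_add_cos_sq (π / n)
  have h : (2 * π / (n:ℝ)) = 2 * (π / n) := by ring
  rw [h, h1]
  linear_combination (-4) * h2

lemma eig_cos (hn : 3 ≤ n) :
    cycLap n *ᵥ (fun j : ZMod n => Real.cos (2 * π * (j.val : ℝ) / n))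
      = (2 - 2 * Real.cos (2 * π / (n:ℝ)))
        • (fun j : ZMod n => Real.cos (2 * π * (j.val : ℝ) / n)) := by
  funext i
  rw [cycLap_mulVec hn]
  simp only [Pi.smul_apply, smul_eq_mul]
  rw [cos_succ hn i, cos_pred hn i]
  ring

lemma eig_sin (hn : 3 ≤ n) :
    cycLap n *ᵥ (fun j : ZMod n => Real.sin (2 * π * (j.val : ℝ) / n))
      = (2 - 2 * Real.cos (2 * π / (n:ℝ)))
        • (fun j : ZMod n => Real.sin (2 * π * (j.val : ℝ) / n)) := by
  funext i
  rw [cycLap_mulVec hn]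
  simp only [Pi.smul_apply, smul_eq_mul]
  rw [sin_succ hn i, sin_pred hn i]
  ring

/-! ### Trace expansion -/

lemma trace_form (S : Matrix (ZMod n) (ZMod n) ℝ) (X : Matrix (ZMod n) (Fin 2) ℝ) :
    (Xᵀ * S * X).trace = ∑ t : Fin 2, (S *ᵥ (fun j => X j t)) ⬝ᵥ (fun j => X j t) := by
  rw [Matrix.trace]
  refine Finset.sum_congr rfl fun t _ => ?_
  simp only [Matrix.diag_apply, Matrix.mul_apply, Matrix.transpose_apply, dotProduct,
    Matrix.mulVec]
  calc (∑ i, (∑ j, X j t * S j i) * X i t)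
      = ∑ i, ∑ j, X j t * S j i * X i t := by
        refine Finset.sum_congr rfl fun i _ => ?_; rw [Finset.sum_mul]
    _ = ∑ j, ∑ i, X j t * S j i * X i t := Finset.sum_comm
    _ = ∑ j, (∑ i, S j i * X i t) * X j t := by
        refine Finset.sum_congr rfl fun j _ => ?_
        rw [Finset.sum_mul]
        exact Finset.sum_congr rfl fun i _ => by ring

end ApproxGuarantee

open ApproxGuarantee in
/-- Approximation guarantee under spectral equivalence: if `S` is
symmetric and `(1/c₁)·⟨L_n^{1/2} x, x⟩ ≤ ⟨S x, x⟩ ≤ c₂·⟨L_n^{1/2} x, x⟩` for all `x`,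
then `Tr(X_Cᵀ S X_C) ≤ 4 c₂ sin(π/n)`, and for every `X` with `Xᵀ X = I₂` and
`Xᵀ 𝟏ₙ = 0` one has `Tr(X_Cᵀ S X_C) ≤ c₁ c₂ · Tr(Xᵀ S X)`. -/
theorem approximation_guarantee (n : ℕ) [NeZero n] (hn : 3 ≤ n)
    (hL : (cycLap n).PosSemidef)
    (c₁ c₂ : ℝ) (hc₁ : 0 < c₁) (hc₂ : 0 < c₂)
    (S : Matrix (ZMod n) (ZMod n) ℝ) (hSsym : S.IsSymm)
    (hlow : ∀ x : ZMod n → ℝ, (1 / c₁) * ((hL.sqrt *ᵥ x) ⬝ᵥ x) ≤ (S *ᵥ x) ⬝ᵥ x)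
    (hup : ∀ x : ZMod n → ℝ, (S *ᵥ x) ⬝ᵥ x ≤ c₂ * ((hL.sqrt *ᵥ x) ⬝ᵥ x)) :
    ((circEmb n)ᵀ * S * circEmb n).trace ≤ 4 * c₂ * Real.sin (π / n) ∧
    (∀ X : Matrix (ZMod n) (Fin 2) ℝ, Xᵀ * X = 1 → Xᵀ *ᵥ (fun _ => (1 : ℝ)) = 0 →
      ((circEmb n)ᵀ * S * circEmb n).trace ≤ c₁ * c₂ * (Xᵀ * S * X).trace) := by
  have hn0 : (0:ℝ) < n := by exact_mod_cast Nat.pos_of_ne_zero (NeZero.ne n)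
  have hsin0 : 0 ≤ Real.sin (π / n) := sin_pi_div_nonneg hn
  set M := hL.sqrt with hMdef
  set v0 : ZMod n → ℝ := fun j => Real.cos (2 * π * (j.val:ℝ) / n) with hv0
  set v1 : ZMod n → ℝ := fun j => Real.sin (2 * π * (j.val:ℝ) / n) with hv1
  have hMv0 : M *ᵥ v0 = (2 * Real.sin (π / n)) • v0 :=
    sqrt_eig hL (mul_nonneg (by norm_num) hsin0) v0 (by rw [← eig_val]; exact eig_cos hn)
  have hMv1 : M *ᵥ v1 = (2 * Real.sin (π / n)) • v1 :=
    sqrt_eig hL (mul_nonneg (by norm_num) hsin0) v1 (by rw [← eig_val]; exact eig_sin hn)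
  have hxc0 : (fun j => circEmb n j 0) = Real.sqrt (2/(n:ℝ)) • v0 := by
    funext j; simp [circEmb, hv0]
  have hxc1 : (fun j => circEmb n j 1) = Real.sqrt (2/(n:ℝ)) • v1 := by
    funext j
    show Real.sqrt (2 / (n : ℝ)) * (if (1 : Fin 2) = 0 then Real.cos (2 * π * (j.val : ℝ) / n)
      else Real.sin (2 * π * (j.val : ℝ) / n)) = _
    rw [if_neg (by decide)]
    simp [hv1]
  have hsq : Real.sqrt (2/(n:ℝ)) ^ 2 = 2/(n:ℝ) := Real.sq_sqrt (by positivity)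
  have key1 : ∀ (v : ZMod n → ℝ), M *ᵥ v = (2 * Real.sin (π / n)) • v →
      (M *ᵥ (Real.sqrt (2/(n:ℝ)) • v)) ⬝ᵥ (Real.sqrt (2/(n:ℝ)) • v)
        = 2 * Real.sin (π / n) * ((2/(n:ℝ)) * (v ⬝ᵥ v)) := by
    intro v hv
    have hss : Real.sqrt (2/(n:ℝ)) * Real.sqrt (2/(n:ℝ)) = 2/(n:ℝ) :=
      Real.mul_self_sqrt (by positivity)
    rw [Matrix.mulVec_smul, hv, smul_dotProduct, dotProduct_smul,
      smul_dotProduct]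
    simp only [smul_eq_mul]
    linear_combination (2 * Real.sin (π / n) * (v ⬝ᵥ v)) * hss
  have hsum2 : v0 ⬝ᵥ v0 + v1 ⬝ᵥ v1 = n := by
    have hjj : ∀ j : ZMod n, v0 j * v0 j + v1 j * v1 j = 1 := fun j => by
      have := Real.sin_sq_add_cos_sq (2 * π * (j.val:ℝ) / n)
      simp only [hv0, hv1]
      linear_combination this
    calc v0 ⬝ᵥ v0 + v1 ⬝ᵥ v1 = ∑ j, (v0 j * v0 j + v1 j * v1 j) := by
          have he : v0 ⬝ᵥ v0 + v1 ⬝ᵥ v1 = (∑ j, v0 j * v0 j) + (∑ j, v1 j * v1 j) := rfl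
          rw [he, ← Finset.sum_add_distrib]
      _ = ∑ _j : ZMod n, (1:ℝ) := Finset.sum_congr rfl (fun j _ => hjj j)
      _ = n := by simp [Finset.card_univ, ZMod.card]
  have htr : ((circEmb n)ᵀ * S * circEmb n).trace
      = (S *ᵥ (fun j => circEmb n j 0)) ⬝ᵥ (fun j => circEmb n j 0)
        + (S *ᵥ (fun j => circEmb n j 1)) ⬝ᵥ (fun j => circEmb n j 1) := by
    rw [trace_form, Fin.sum_univ_two]
  have part1 : ((circEmb n)ᵀ * S * circEmb n).trace ≤ 4 * c₂ * Real.sin (π / n) := by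
    rw [htr, hxc0, hxc1]
    have b0 := hup (Real.sqrt (2/(n:ℝ)) • v0)
    have b1 := hup (Real.sqrt (2/(n:ℝ)) • v1)
    rw [key1 v0 hMv0] at b0
    rw [key1 v1 hMv1] at b1
    have hfinal : c₂ * (2 * Real.sin (π / n) * ((2/(n:ℝ)) * (v0 ⬝ᵥ v0)))
        + c₂ * (2 * Real.sin (π / n) * ((2/(n:ℝ)) * (v1 ⬝ᵥ v1)))
        = 4 * c₂ * Real.sin (π / n) := by
      have h2 : (2/(n:ℝ)) * (v0 ⬝ᵥ v0) + (2/(n:ℝ)) * (v1 ⬝ᵥ v1) = 2 := by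
        rw [← mul_add, hsum2]; field_simp
      linear_combination (c₂ * (2 * Real.sin (π / n))) * h2
    linarith
  refine ⟨part1, ?_⟩
  intro X hX h1
  have hcolX : ∀ t : Fin 2, ((fun j => X j t) ⬝ᵥ (fun j => X j t)) = 1 := by
    intro t
    have := congrArg (fun A => A t t) hX
    simpa [Matrix.mul_apply, Matrix.transpose_apply, Matrix.one_apply, dotProduct] using this
  have hsumX : ∀ t : Fin 2, ∑ j, X j t = 0 := by
    intro t
    have := congrArg (fun v => v t) h1
    simpa [Matrix.mulVec, dotProduct, Matrix.transpose_apply] using this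
  have hSx : ∀ t : Fin 2, 2 * Real.sin (π / n)
      ≤ c₁ * ((S *ᵥ (fun j => X j t)) ⬝ᵥ (fun j => X j t)) := by
    intro t
    have h2 := sqrt_quad_lower hn hL (fun j => X j t) (hsumX t)
    rw [hcolX t, mul_one] at h2
    have h3 := hlow (fun j => X j t)
    have h4 := mul_le_mul_of_nonneg_left h3 hc₁.le
    rw [← mul_assoc, mul_one_div, div_self hc₁.ne', one_mul] at h4
    linarith
  have htrX : (Xᵀ * S * X).trace
      = (S *ᵥ (fun j => X j 0)) ⬝ᵥ (fun j => X j 0)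
        + (S *ᵥ (fun j => X j 1)) ⬝ᵥ (fun j => X j 1) := by
    rw [trace_form, Fin.sum_univ_two]
  have hge : 4 * Real.sin (π / n) ≤ c₁ * (Xᵀ * S * X).trace := by
    rw [htrX, mul_add]
    have := hSx 0
    have := hSx 1
    linarith
  refine le_trans part1 ?_
  calc 4 * c₂ * Real.sin (π / n) = c₂ * (4 * Real.sin (π / n)) := by ring
    _ ≤ c₂ * (c₁ * (Xᵀ * S * X).trace) := mul_le_mul_of_nonneg_left hge hc₂.le
    _ = c₁ * c₂ * (Xᵀ * S * X).trace := by ring
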